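/- Let F be a field of characteristic p > 0, let B_m = F[x_1,…,x_m]/(x_1^p,…,x_m^p), and let D be a derivation of B_m. If D is nilpotent as a linear endomorphism of B_m and the kernel of D (the ring of D-constants) equals F·1, then D^{p^m - 1} ≠ 0, i.e. D is regular nilpotent. -/

import Mathlib

set_option synthInstance.maxHeartbeats 1000000
set_option maxHeartbeats 1000000

/-- The truncated polynomial ring `B_m = F[x_1,…,x_m]/(x_1^p,…,x_m^p)`. -/
abbrev TruncPoly (F : Type*) [Field F] (p m : ℕ) : Type _ :=
  MvPolynomial (Fin m) F ⧸
    Ideal.span (Set.range fun i : Fin m => (MvPolynomial.X i : MvPolynomial (Fin m) F) ^ p)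

open MvPolynomial in
lemma truncPoly_mem_ideal {F : Type*} [Field F] {p m : ℕ}
    {x : MvPolynomial (Fin m) F}
    (hx : x ∈ Ideal.span (Set.range fun i : Fin m =>
      (MvPolynomial.X i : MvPolynomial (Fin m) F) ^ p)) :
    ∀ xi ∈ x.support, ∃ i : Fin m, p ≤ xi i := by
  have hset : (Set.range fun i : Fin m => (X i : MvPolynomial (Fin m) F) ^ p)
      = (fun s => monomial s (1 : F)) '' (Set.range fun i : Fin m => Finsupp.single i p) := by
    rw [← Set.range_comp]
    exact congrArg Set.range (funext fun i => X_pow_eq_monomial)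
  rw [hset] at hx
  intro xi hxi
  obtain ⟨si, ⟨i, rfl⟩, hle⟩ := mem_ideal_span_monomial_image.mp hx xi hxi
  exact ⟨i, by simpa using hle i⟩

open MvPolynomial in
/-- The truncated polynomial ring has rank at least `p ^ m`. -/
lemma truncPoly_rank_ge {F : Type*} [Field F] {p m : ℕ} (hp : 0 < p) :
    ((p ^ m : ℕ) : Cardinal) ≤ Module.rank F (TruncPoly F p m) := by
  classical
  set I : Ideal (MvPolynomial (Fin m) F) :=
    Ideal.span (Set.range fun i : Fin m => (MvPolynomial.X i : MvPolynomial (Fin m) F) ^ p)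
    with hI
  set π : MvPolynomial (Fin m) F →ₗ[F] TruncPoly F p m :=
    (Ideal.Quotient.mkₐ F I).toLinearMap with hπ
  set e : (Fin m → Fin p) → (Fin m →₀ ℕ) :=
    fun a => Finsupp.equivFunOnFinite.symm (fun i => (a i : ℕ)) with he'
  have he : Function.Injective e := by
    intro a b hab
    funext i
    have := congrArg (fun f : Fin m →₀ ℕ => f i) hab
    exact Fin.val_injective (by simpa [he'] using this)
  have hmono : LinearIndependent F (fun a : Fin m → Fin p => monomial (e a) (1 : F)) :=
    (basisMonomials (Fin m) F).linearIndependent.comp e he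
  have hli : LinearIndependent F (fun a : Fin m → Fin p => π (monomial (e a) (1 : F))) := by
    refine LinearIndependent.map hmono (f := π) ?_
    rw [Submodule.disjoint_def]
    intro x hxspan hxker
    have hxI : x ∈ I := by
      have : Ideal.Quotient.mk I x = 0 := hxker
      exact (Ideal.Quotient.eq_zero_iff_mem).mp this
    have hdeg : x ∈ restrictDegree (Fin m) F (p - 1) := by
      refine Submodule.span_le.mpr ?_ hxspan
      rintro y ⟨a, rfl⟩
      rw [SetLike.mem_coe, mem_restrictDegree]
      intro s hs i
      have hsup : s ∈ (monomial (e a) (1 : F)).support := hs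
      have hs' : s = e a := by
        rw [support_monomial, if_neg one_ne_zero] at hsup
        simpa using hsup
      subst hs'
      have : (a i : ℕ) < p := (a i).isLt
      simpa [he'] using Nat.le_sub_one_of_lt this
    by_contra hne
    obtain ⟨xi, hxi⟩ := (Finset.nonempty_iff_ne_empty.mpr
      (fun h => hne (support_eq_empty.mp h)))
    obtain ⟨i, hi⟩ := truncPoly_mem_ideal hxI xi hxi
    have := (mem_restrictDegree _ _ _).mp hdeg xi hxi i
    omega
  have h := hli.cardinal_lift_le_rank
  rw [Cardinal.mk_fintype, Fintype.card_fun, Fintype.card_fin, Fintype.card_fin] at h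
  rw [Cardinal.lift_natCast, Cardinal.lift_id'] at h
  exact h

/-- If the kernel of `f` has rank at most one, the rank of the whole space is bounded by
the rank of the range of `f ^ k` plus `k`. -/
lemma rank_le_range_pow_add {F V : Type*} [Field F] [AddCommGroup V] [Module F V]
    (f : V →ₗ[F] V) (hk : Module.rank F (LinearMap.ker f) ≤ 1) (k : ℕ) :
    Module.rank F V ≤ Module.rank F (LinearMap.range (f ^ k)) + k := by
  induction k with
  | zero =>
      rw [pow_zero, Module.End.one_eq_id, LinearMap.range_id, Nat.cast_zero, add_zero, rank_top]
  | succ k ih =>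
      have hmaps : ∀ x ∈ LinearMap.range (f ^ k), f x ∈ LinearMap.range (f ^ (k + 1)) := by
        rintro x ⟨y, rfl⟩
        exact ⟨y, by rw [pow_succ']; rfl⟩
      set g : LinearMap.range (f ^ k) →ₗ[F] LinearMap.range (f ^ (k + 1)) :=
        f.restrict hmaps with hg
      have hrn := LinearMap.rank_range_add_rank_ker g
      have h1 : Module.rank F (LinearMap.range g)
          ≤ Module.rank F (LinearMap.range (f ^ (k + 1))) := Submodule.rank_le _
      have h2 : Module.rank F (LinearMap.ker g) ≤ Module.rank F (LinearMap.ker f) := by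
        refine LinearMap.rank_le_of_injective
          (LinearMap.codRestrict (LinearMap.ker f)
            ((LinearMap.range (f ^ k)).subtype.comp (LinearMap.ker g).subtype) ?_) ?_
        · intro x
          have hx : g x.1 = 0 := x.2
          exact congrArg Subtype.val hx
        · intro x y hxy
          have := congrArg Subtype.val hxy
          exact Subtype.ext (Subtype.ext this)
      calc Module.rank F V ≤ Module.rank F (LinearMap.range (f ^ k)) + k := ih
        _ = Module.rank F (LinearMap.range g) + Module.rank F (LinearMap.ker g) + k := by
            rw [hrn]
        _ ≤ Module.rank F (LinearMap.range (f ^ (k + 1))) + 1 + k := by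
            gcongr
            exact h2.trans hk
        _ = Module.rank F (LinearMap.range (f ^ (k + 1))) + (k + 1 : ℕ) := by
            push_cast
            ring

/-- A nilpotent derivation of `B_m` whose ring of constants is exactly `F·1`
is regular nilpotent: `D^{p^m - 1} ≠ 0`. -/
theorem stmt_3 {F : Type*} [Field F] {p m : ℕ} (hp : p.Prime) [CharP F p]
    (D : Derivation F (TruncPoly F p m) (TruncPoly F p m))
    (hnil : IsNilpotent D.toLinearMap)
    (hker : ∀ f : TruncPoly F p m,
      D f = 0 ↔ ∃ c : F, f = algebraMap F (TruncPoly F p m) c) :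
    D.toLinearMap ^ (p ^ m - 1) ≠ 0 := by
  intro hzero
  set f := D.toLinearMap with hf
  have hkr : Module.rank F (LinearMap.ker f) ≤ 1 := by
    have hle : LinearMap.ker f ≤ Submodule.span F {(1 : TruncPoly F p m)} := by
      intro x hx
      obtain ⟨c, rfl⟩ := (hker x).mp hx
      rw [Algebra.algebraMap_eq_smul_one]
      exact Submodule.smul_mem _ _ (Submodule.mem_span_singleton_self _)
    calc Module.rank F (LinearMap.ker f)
        ≤ Module.rank F (Submodule.span F {(1 : TruncPoly F p m)}) :=
          Submodule.rank_mono hle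
      _ ≤ Cardinal.mk ({(1 : TruncPoly F p m)} : Set _) := rank_span_le _
      _ = 1 := Cardinal.mk_singleton _
  have hub := rank_le_range_pow_add f hkr (p ^ m - 1)
  rw [hzero, LinearMap.range_zero, rank_bot, zero_add] at hub
  have hlb := truncPoly_rank_ge (F := F) (p := p) (m := m) hp.pos
  have : ((p ^ m : ℕ) : Cardinal) ≤ ((p ^ m - 1 : ℕ) : Cardinal) := hlb.trans hub
  rw [Nat.cast_le] at this
  have hpos : 0 < p ^ m := pow_pos hp.pos m
  omega
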